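/- Let D ⊆ ℝ be an open convex set, let q : ℝ → ℝ be a quadratic polynomial (so q''' ≡ 0), and let f : ℝ → ℝ be three times differentiable on D with f self-concordant on D, i.e. |f'''(x)| ≤ 2·(f''(x))^{3/2} and f''(x) ≥ 0 for all x ∈ D. Assume q + f is convex on D, i.e. q''(x) + f''(x) ≥ 0 for all x ∈ D. Then the function g(x) := 8·(q(x) + 2·f(x)) is self-concordant on D, i.e. |g'''(x)| ≤ 2·(g''(x))^{3/2} and g''(x) ≥ 0 for all x ∈ D. -/

import Mathlib

private lemma rpow_three_half_eq_sqrt (x : ℝ) (hx : 0 ≤ x) :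
    x ^ ((3 : ℝ) / 2) = Real.sqrt x ^ 3 := by
  rw [Real.sqrt_eq_rpow, ← Real.rpow_natCast (x ^ ((1:ℝ)/2)) 3, ← Real.rpow_mul hx]
  norm_num

/-- If `q` is a quadratic polynomial, `f` is three times differentiable and
self-concordant on an open convex set `D ⊆ ℝ`, and `q + f` is convex on `D`
(in the sense `q'' + f'' ≥ 0` on `D`), then `g := 8·(q + 2·f)` is self-concordant on `D`. -/
theorem stmt_0 (D : Set ℝ) (hD : IsOpen D) (hDconv : Convex ℝ D)
    (q f : ℝ → ℝ) (a b c : ℝ)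
    (hq : ∀ x, q x = a * x ^ 2 + b * x + c)
    (hf1 : ∀ x ∈ D, DifferentiableAt ℝ f x)
    (hf2 : ∀ x ∈ D, DifferentiableAt ℝ (deriv f) x)
    (hf3 : ∀ x ∈ D, DifferentiableAt ℝ (deriv (deriv f)) x)
    (hfsc : ∀ x ∈ D, 0 ≤ deriv (deriv f) x ∧
      |deriv (deriv (deriv f)) x| ≤ 2 * (deriv (deriv f) x) ^ ((3 : ℝ) / 2))
    (hconv : ∀ x ∈ D, 0 ≤ deriv (deriv q) x + deriv (deriv f) x) :
    ∀ x ∈ D, 0 ≤ deriv (deriv (fun y => 8 * (q y + 2 * f y))) x ∧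
      |deriv (deriv (deriv (fun y => 8 * (q y + 2 * f y)))) x| ≤
        2 * (deriv (deriv (fun y => 8 * (q y + 2 * f y))) x) ^ ((3 : ℝ) / 2) := by
  have hgfun : (fun y => 8 * (q y + 2 * f y)) =
      fun y => 8 * a * y ^ 2 + 8 * b * y + 8 * c + 16 * f y := by
    funext y; rw [hq]; ring
  -- q'' = 2a
  have hq1 : deriv q = fun x => 2 * a * x + b := by
    funext x
    have h : HasDerivAt q (2 * a * x + b) x := by
      have h1 : HasDerivAt (fun y : ℝ => a * y ^ 2 + b * y + c) (2 * a * x + b) x := by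
        have := (((hasDerivAt_pow 2 x).const_mul a).add ((hasDerivAt_id x).const_mul b)).add_const c
        refine this.congr_deriv ?_; push_cast; ring
      exact h1.congr_of_eventuallyEq (Filter.Eventually.of_forall fun y => (hq y))
    exact h.deriv
  have hq2 : ∀ x, deriv (deriv q) x = 2 * a := by
    intro x
    rw [hq1]
    have h : HasDerivAt (fun x : ℝ => 2 * a * x + b) (2 * a) x := by
      have := ((hasDerivAt_id x).const_mul (2 * a)).add_const b
      refine this.congr_deriv ?_; push_cast; ring
    exact h.deriv
  -- first derivative of g on D
  have hd1 : ∀ x ∈ D, deriv (fun y => 8 * (q y + 2 * f y)) x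
      = 16 * a * x + 8 * b + 16 * deriv f x := by
    intro x hx
    rw [hgfun]
    have h : HasDerivAt (fun y => 8 * a * y ^ 2 + 8 * b * y + 8 * c + 16 * f y)
        (16 * a * x + 8 * b + 16 * deriv f x) x := by
      have := ((((hasDerivAt_pow 2 x).const_mul (8 * a)).add
        ((hasDerivAt_id x).const_mul (8 * b))).add_const (8 * c)).add
        ((hf1 x hx).hasDerivAt.const_mul 16)
      refine this.congr_deriv ?_
      push_cast; ring
    exact h.deriv
  -- second derivative on D
  have hd2 : ∀ x ∈ D, deriv (deriv (fun y => 8 * (q y + 2 * f y))) x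
      = 16 * a + 16 * deriv (deriv f) x := by
    intro x hx
    have heq : deriv (fun y => 8 * (q y + 2 * f y)) =ᶠ[nhds x]
        (fun y => 16 * a * y + 8 * b + 16 * deriv f y) := by
      filter_upwards [hD.mem_nhds hx] with y hy using hd1 y hy
    rw [heq.deriv_eq]
    have h : HasDerivAt (fun y => 16 * a * y + 8 * b + 16 * deriv f y)
        (16 * a + 16 * deriv (deriv f) x) x := by
      have := (((hasDerivAt_id x).const_mul (16 * a)).add_const (8 * b)).add
        ((hf2 x hx).hasDerivAt.const_mul 16)
      refine this.congr_deriv ?_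
      ring
    exact h.deriv
  -- third derivative on D
  have hd3 : ∀ x ∈ D, deriv (deriv (deriv (fun y => 8 * (q y + 2 * f y)))) x
      = 16 * deriv (deriv (deriv f)) x := by
    intro x hx
    have heq : deriv (deriv (fun y => 8 * (q y + 2 * f y))) =ᶠ[nhds x]
        (fun y => 16 * a + 16 * deriv (deriv f) y) := by
      filter_upwards [hD.mem_nhds hx] with y hy using hd2 y hy
    rw [heq.deriv_eq]
    have h : HasDerivAt (fun y => 16 * a + 16 * deriv (deriv f) y)
        (16 * deriv (deriv (deriv f)) x) x := by
      have := (hasDerivAt_const x (16 * a)).add ((hf3 x hx).hasDerivAt.const_mul 16)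
      refine this.congr_deriv ?_; push_cast; ring
    exact h.deriv
  intro x hx
  obtain ⟨hA, hB⟩ := hfsc x hx
  have hQ := hconv x hx
  rw [hq2 x] at hQ
  rw [hd2 x hx, hd3 x hx]
  set A := deriv (deriv f) x with hAdef
  set B := deriv (deriv (deriv f)) x with hBdef
  have hG : (0 : ℝ) ≤ 16 * a + 16 * A := by linarith
  refine ⟨hG, ?_⟩
  rw [rpow_three_half_eq_sqrt _ hG]
  rw [rpow_three_half_eq_sqrt _ hA] at hB
  set s := Real.sqrt A with hs
  set t := Real.sqrt (16 * a + 16 * A) with ht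
  have hs0 : 0 ≤ s := Real.sqrt_nonneg _
  have ht0 : 0 ≤ t := Real.sqrt_nonneg _
  have hs2 : s ^ 2 = A := Real.sq_sqrt hA
  have ht2 : t ^ 2 = 16 * a + 16 * A := Real.sq_sqrt hG
  have hts : t ^ 2 ≥ 8 * s ^ 2 := by rw [hs2, ht2]; linarith
  have key : 16 * s ^ 3 ≤ t ^ 3 := by
    nlinarith [sq_nonneg (t - 2 * s), sq_nonneg (t + 2 * s), sq_nonneg (t * s),
      mul_nonneg hs0 ht0, pow_le_pow_left₀ (by positivity : (0:ℝ) ≤ 8 * s ^ 2) hts 3]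
  have habs : |16 * B| = 16 * |B| := by rw [abs_mul]; norm_num
  calc |16 * B| = 16 * |B| := habs
    _ ≤ 16 * (2 * s ^ 3) := by nlinarith
    _ ≤ 2 * t ^ 3 := by nlinarith
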